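/- Let U = U_n ⋯ U_1 be a product of unitary elements U_1, …, U_n of a unital C*-algebra, and suppose each factor decomposes as U_i = G_i + B_i where each G_i is unitary and ‖B_i‖ ≤ ε. For a subset S ⊆ {1,…,n} let T_S denote the product C_n ⋯ C_1 in which C_i = B_i if i ∈ S and C_i = G_i otherwise, and let 𝐁 = Σ_{|S| ≥ k} T_S be the sum of all terms in the expansion of U containing at least k factors B_i. Then ‖𝐁‖ ≤ C(n,k) · ε^k, where C(n,k) is the binomial coefficient. -/
import Mathlib

open Finset in
private lemma blemma_aux {A : Type*} [NormedRing A] [StarRing A] [CStarRing A]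
    (ε : ℝ) (hε : 0 ≤ ε) (U G B : ℕ → A) :
    ∀ n, (∀ i < n, U i ∈ unitary A) → (∀ i < n, G i ∈ unitary A) →
      (∀ i < n, U i = G i + B i) → (∀ i < n, ‖B i‖ ≤ ε) → ∀ k,
    ‖∑ S ∈ (Finset.range n).powerset.filter (fun S => k ≤ S.card),
        ((List.range n).reverse.map (fun i => if i ∈ S then B i else G i)).prod‖
      ≤ (n.choose k : ℝ) * ε ^ k := by
  intro n
  induction n with
  | zero =>
    intro _ _ _ _ k
    rcases Nat.eq_zero_or_pos k with rfl | hk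
    · simp only [Finset.range_zero, Finset.powerset_empty, List.range_zero]
      rcases subsingleton_or_nontrivial A with h | h
      · simp [Subsingleton.elim (1 : A) 0]
      · simp [CStarRing.norm_one]
    · have : (Finset.powerset (Finset.range 0)).filter (fun S => k ≤ S.card) = ∅ := by
        ext S
        simp only [Finset.mem_filter, Finset.mem_powerset, Finset.range_zero,
          Finset.subset_empty, Finset.notMem_empty, iff_false, not_and]
        rintro rfl
        simp only [Finset.card_empty]
        omega
      rw [this]
      simp [Nat.choose_eq_zero_of_lt hk]
  | succ n IH =>
    intro hU hG hdecomp hB k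
    have hU' : ∀ i < n, U i ∈ unitary A := fun i hi => hU i (by omega)
    have hG' : ∀ i < n, G i ∈ unitary A := fun i hi => hG i (by omega)
    have hdecomp' : ∀ i < n, U i = G i + B i := fun i hi => hdecomp i (by omega)
    have hB' : ∀ i < n, ‖B i‖ ≤ ε := fun i hi => hB i (by omega)
    have hsplit :
        ∑ S ∈ (Finset.range (n+1)).powerset.filter (fun S => k ≤ S.card),
            ((List.range (n+1)).reverse.map (fun i => if i ∈ S then B i else G i)).prod
        = G n * (∑ S ∈ (Finset.range n).powerset.filter (fun S => k ≤ S.card),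
            ((List.range n).reverse.map (fun i => if i ∈ S then B i else G i)).prod)
          + B n * (∑ S ∈ (Finset.range n).powerset.filter (fun S => k - 1 ≤ S.card),
            ((List.range n).reverse.map (fun i => if i ∈ S then B i else G i)).prod) := by
      rw [Finset.sum_filter, Finset.sum_filter, Finset.sum_filter,
        Finset.range_add_one, Finset.sum_powerset_insert (by simp)]
      rw [Finset.mul_sum, Finset.mul_sum]
      congr 1
      · apply Finset.sum_congr rfl
        intro S hS
        rw [Finset.mem_powerset] at hS
        have hnS : n ∉ S := fun h => absurd (hS h) (by simp)
        have hlist : (List.range (n+1)).reverse.map (fun i => if i ∈ S then B i else G i)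
            = G n :: (List.range n).reverse.map (fun i => if i ∈ S then B i else G i) := by
          rw [List.range_succ, List.reverse_append]
          simp [hnS]
        rw [hlist, List.prod_cons, mul_ite, mul_zero]
      · apply Finset.sum_congr rfl
        intro S hS
        rw [Finset.mem_powerset] at hS
        have hnS : n ∉ S := fun h => absurd (hS h) (by simp)
        have hcard : (insert n S).card = S.card + 1 := Finset.card_insert_of_notMem hnS
        have hlist : (List.range (n+1)).reverse.map (fun i => if i ∈ insert n S then B i else G i)
            = B n :: (List.range n).reverse.map (fun i => if i ∈ S then B i else G i) := by
          rw [List.range_succ, List.reverse_append]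
          simp only [List.reverse_singleton, List.singleton_append, List.map_cons,
            Finset.mem_insert_self, if_pos]
          congr 1
          apply List.map_congr_left
          intro a ha
          have : a < n := by simpa using ha
          have : a ≠ n := Nat.ne_of_lt this
          simp [Finset.mem_insert, this]
        rw [hlist, List.prod_cons, hcard, mul_ite, mul_zero]
        congr 1
        simp [tsub_le_iff_right]
    rw [hsplit]
    rcases Nat.eq_zero_or_pos k with rfl | hkpos
    · simp only [Nat.zero_sub]
      have heq : G n * (∑ S ∈ (Finset.range n).powerset.filter (fun S => 0 ≤ S.card),
            ((List.range n).reverse.map (fun i => if i ∈ S then B i else G i)).prod)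
          + B n * (∑ S ∈ (Finset.range n).powerset.filter (fun S => 0 ≤ S.card),
            ((List.range n).reverse.map (fun i => if i ∈ S then B i else G i)).prod)
          = U n * (∑ S ∈ (Finset.range n).powerset.filter (fun S => 0 ≤ S.card),
            ((List.range n).reverse.map (fun i => if i ∈ S then B i else G i)).prod) := by
        rw [hdecomp n (by omega), add_mul]
      rw [heq, CStarRing.norm_mem_unitary_mul _ (hU n (by omega))]
      simpa using IH hU' hG' hdecomp' hB' 0
    · obtain ⟨j, rfl⟩ := Nat.exists_eq_add_of_le hkpos
      simp only [Nat.add_sub_cancel_left] at *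
      set X := ∑ S ∈ (Finset.range n).powerset.filter (fun S => Nat.succ 0 + j ≤ S.card),
          ((List.range n).reverse.map (fun i => if i ∈ S then B i else G i)).prod with hX
      set Y := ∑ S ∈ (Finset.range n).powerset.filter (fun S => j ≤ S.card),
          ((List.range n).reverse.map (fun i => if i ∈ S then B i else G i)).prod with hY
      have h1 : ‖G n * X + B n * Y‖ ≤ ‖G n * X‖ + ‖B n * Y‖ := norm_add_le _ _
      rw [CStarRing.norm_mem_unitary_mul _ (hG n (by omega))] at h1
      have h2 : ‖B n * Y‖ ≤ ε * ((n.choose j : ℝ) * ε ^ j) := by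
        calc ‖B n * Y‖ ≤ ‖B n‖ * ‖Y‖ := norm_mul_le _ _
          _ ≤ ε * ((n.choose j : ℝ) * ε ^ j) :=
            mul_le_mul (hB n (by omega)) (IH hU' hG' hdecomp' hB' j) (norm_nonneg _) hε
      have h3 : ‖X‖ ≤ (n.choose (Nat.succ 0 + j) : ℝ) * ε ^ (Nat.succ 0 + j) :=
        IH hU' hG' hdecomp' hB' (Nat.succ 0 + j)
      have hfin : ‖G n * X + B n * Y‖
          ≤ (n.choose (Nat.succ 0 + j) : ℝ) * ε ^ (Nat.succ 0 + j)
            + ε * ((n.choose j : ℝ) * ε ^ j) := by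
        calc ‖G n * X + B n * Y‖ ≤ ‖X‖ + ‖B n * Y‖ := h1
          _ ≤ _ := add_le_add h3 h2
      refine hfin.trans (le_of_eq ?_)
      have : Nat.succ 0 + j = j + 1 := by omega
      rw [this] at *
      rw [Nat.choose_succ_succ (n := n) (k := j)]
      push_cast
      ring

open Finset in
/-- **Lemma 1 (second part).**  Let `U = U_n ⋯ U_1` be a product of unitaries in a unital
C*-algebra, with `U i = G i + B i`, each `G i` unitary and `‖B i‖ ≤ ε`.  The sum `𝐁` of
all terms in the expansion of the product containing at least `k` factors `B i` satisfies
`‖𝐁‖ ≤ C(n,k) ε^k`. -/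
theorem blemma_unitary {A : Type*} [NormedRing A] [StarRing A] [CStarRing A]
    [NormedAlgebra ℂ A] [StarModule ℂ A]
    (n k : ℕ) (hk : k ≤ n) (ε : ℝ) (hε : 0 ≤ ε)
    (U G B : ℕ → A)
    (hU : ∀ i < n, U i ∈ unitary A)
    (hG : ∀ i < n, G i ∈ unitary A)
    (hdecomp : ∀ i < n, U i = G i + B i)
    (hB : ∀ i < n, ‖B i‖ ≤ ε) :
    ‖∑ S ∈ (Finset.range n).powerset.filter (fun S => k ≤ S.card),
        ((List.range n).reverse.map (fun i => if i ∈ S then B i else G i)).prod‖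
      ≤ (n.choose k : ℝ) * ε ^ k :=
  blemma_aux ε hε U G B n hU hG hdecomp hB k
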